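/- The projection Π_Q is a contraction for the completely bounded norm of homogeneous forms: for a homogeneous p and family Q of disjoint subsets, ‖Π_Q p‖_cb ≤ ‖p‖_cb. -/

import Mathlib

open MvPolynomial

noncomputable section

/-- `d × d` real matrices, viewed as operators on Euclidean space (with operator norm). -/
abbrev Mat (d : ℕ) := EuclideanSpace ℝ (Fin d) →L[ℝ] EuclideanSpace ℝ (Fin d)

/-- Evaluation of a `t`-tensor as a degree-`t` form: `T(x) = ∑_i T_i x_{i₁}⋯x_{i_t}`. -/
def tEval {n t : ℕ} (T : (Fin t → Fin n) → ℝ) (x : Fin n → ℝ) : ℝ :=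
  ∑ i : Fin t → Fin n, T i * ∏ s, x (i s)

/-- The completely bounded norm of a `t`-tensor (single contraction-valued map). -/
def cbNormT {n t : ℕ} (T : (Fin t → Fin n) → ℝ) : ℝ :=
  sSup {c : ℝ | ∃ (d : ℕ) (A : Fin n → Mat d),
    (∀ j, ‖A j‖ ≤ 1) ∧
    c = ‖∑ i : Fin t → Fin n, T i • (List.ofFn fun s => A (i s)).prod‖}

/-- The completely bounded norm of a degree-`t` form:
`‖p‖_cb = inf { ‖T‖_cb : T(x) = p(x) ∀ x }`. -/
def polyCb (n t : ℕ) (p : MvPolynomial (Fin n) ℝ) : ℝ :=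
  sInf {c : ℝ | ∃ T : (Fin t → Fin n) → ℝ,
    (∀ x : Fin n → ℝ, tEval T x = eval x p) ∧ c = cbNormT T}

/-- The projection `Π_Q` onto the span of monomials `x^α` with `∑_{i ∈ I} α_i` odd
for every `I ∈ Q`. -/
def parityProj {n : ℕ} (Q : Finset (Finset (Fin n))) (p : MvPolynomial (Fin n) ℝ) :
    MvPolynomial (Fin n) ℝ :=
  ∑ α ∈ p.support,
    if ∀ I ∈ Q, Odd (∑ i ∈ I, α i) then monomial α (p.coeff α) else 0


set_option maxHeartbeats 1000000
set_option synthInstance.maxHeartbeats 400000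

noncomputable section ParityAux

variable {n t : ℕ}

def eps {n : ℕ} (S : Finset (Finset (Fin n))) (I : Finset (Fin n)) : ℝ :=
  if I ∈ S then -1 else 1

def wgt {n : ℕ} (Q S : Finset (Finset (Fin n))) (j : Fin n) : ℝ :=
  ∏ I ∈ Q with j ∈ I, eps S I

lemma abs_eps (S : Finset (Finset (Fin n))) (I : Finset (Fin n)) : |eps S I| = 1 := by
  unfold eps; split <;> simp

lemma abs_wgt (Q S : Finset (Finset (Fin n))) (j : Fin n) : |wgt Q S j| = 1 := by
  rw [wgt, Finset.abs_prod]
  exact Finset.prod_eq_one fun I _ => abs_eps S I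

lemma wgt_pow_prod (Q S : Finset (Finset (Fin n))) (e : Fin n → ℕ) :
    ∏ j, (wgt Q S j) ^ (e j) = ∏ I ∈ Q, (eps S I) ^ (∑ j ∈ I, e j) := by
  calc ∏ j, (wgt Q S j) ^ e j
      = ∏ j, ∏ I ∈ Q with j ∈ I, (eps S I) ^ e j := by
        simp_rw [wgt, ← Finset.prod_pow]
    _ = ∏ I ∈ Q, ∏ j ∈ Finset.univ with j ∈ I, (eps S I) ^ e j := by
        refine Finset.prod_comm' fun j I => ?_
        simp [and_comm]
    _ = ∏ I ∈ Q, (eps S I) ^ (∑ j ∈ I, e j) := by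
        refine Finset.prod_congr rfl fun I _ => ?_
        rw [Finset.filter_univ_mem, Finset.prod_pow_eq_pow_sum]

lemma core (Q : Finset (Finset (Fin n))) (e : Fin n → ℕ) :
    ∑ S ∈ Q.powerset, (∏ I ∈ Q, eps S I) * ∏ j, (wgt Q S j) ^ (e j)
    = if ∀ I ∈ Q, Odd (∑ j ∈ I, e j) then (2:ℝ) ^ Q.card else 0 := by
  have h1 : ∀ S ∈ Q.powerset, (∏ I ∈ Q, eps S I) * ∏ j, (wgt Q S j) ^ e j
      = (∏ I ∈ S, (-1:ℝ) ^ (∑ j ∈ I, e j + 1)) * ∏ I ∈ Q \ S, (1:ℝ) := by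
    intro S hS
    rw [Finset.mem_powerset] at hS
    rw [wgt_pow_prod, ← Finset.prod_mul_distrib]
    have h2 : ∀ I ∈ Q, eps S I * eps S I ^ (∑ j ∈ I, e j) = eps S I ^ (∑ j ∈ I, e j + 1) := by
      intro I _; rw [pow_succ, mul_comm]
    rw [Finset.prod_congr rfl h2, ← Finset.prod_sdiff hS, mul_comm]
    congr 1
    · exact Finset.prod_congr rfl fun I hI => by rw [eps, if_pos hI]
    · exact Finset.prod_congr rfl fun I hI => by
        rw [eps, if_neg (Finset.mem_sdiff.1 hI).2, one_pow]
  rw [Finset.sum_congr rfl h1, ← Finset.prod_add]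
  by_cases h : ∀ I ∈ Q, Odd (∑ j ∈ I, e j)
  · rw [if_pos h]
    have : ∀ I ∈ Q, ((-1:ℝ) ^ (∑ j ∈ I, e j + 1) + 1) = 2 := by
      intro I hI
      rw [Even.neg_one_pow ((h I hI).add_one)]
      norm_num
    rw [Finset.prod_congr rfl this, Finset.prod_const]
  · rw [if_neg h]
    push_neg at h
    obtain ⟨I, hI, hodd⟩ := h
    refine Finset.prod_eq_zero hI ?_
    rw [Odd.neg_one_pow ?_]
    · ring
    · exact Nat.odd_add_one.mpr hodd

end ParityAux

section Part2
open Finset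
variable {n t : ℕ}

lemma sum_cnt (i : Fin t → Fin n) (I : Finset (Fin n)) :
    ∑ j ∈ I, (Finset.univ.filter fun s => i s = j).card = (Finset.univ.filter fun s => i s ∈ I).card := by
  simp only [Finset.card_filter]
  rw [Finset.sum_comm]
  refine Finset.sum_congr rfl fun s _ => ?_
  rw [Finset.sum_ite_eq I (i s) (fun _ => 1)]

lemma prod_fib (f : Fin n → ℝ) (i : Fin t → Fin n) :
    ∏ s, f (i s) = ∏ j, f j ^ (Finset.univ.filter fun s => i s = j).card := by
  rw [← Finset.prod_fiberwise Finset.univ i (fun s => f (i s))]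
  refine Finset.prod_congr rfl fun j _ => ?_
  rw [Finset.prod_congr rfl (fun s hs => by
        rw [show i s = j from by simpa using (Finset.mem_filter.1 hs).2]),
      Finset.prod_const]

def projT {n t : ℕ} (Q : Finset (Finset (Fin n))) (T : (Fin t → Fin n) → ℝ) :
    (Fin t → Fin n) → ℝ :=
  fun i => if ∀ I ∈ Q, Odd (Finset.univ.filter fun s => i s ∈ I).card then T i else 0

end Part2
section Part3
variable {n t : ℕ}

lemma tEval_proj (Q : Finset (Finset (Fin n))) (T : (Fin t → Fin n) → ℝ) (x : Fin n → ℝ) :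
    (2:ℝ) ^ Q.card * tEval (projT Q T) x
    = ∑ S ∈ Q.powerset, (∏ I ∈ Q, eps S I) * tEval T (fun j => wgt Q S j * x j) := by
  unfold tEval projT
  simp_rw [Finset.mul_sum]
  rw [Finset.sum_comm]
  refine Finset.sum_congr rfl fun i _ => ?_
  have h1 : ∀ S ∈ Q.powerset,
      (∏ I ∈ Q, eps S I) * (T i * ∏ s, (wgt Q S (i s) * x (i s)))
      = ((∏ I ∈ Q, eps S I) *
          ∏ j, wgt Q S j ^ (Finset.univ.filter fun s => i s = j).card) *
        (T i * ∏ s, x (i s)) := by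
    intro S _
    rw [Finset.prod_mul_distrib, prod_fib (wgt Q S) i]
    ring
  rw [Finset.sum_congr rfl h1, ← Finset.sum_mul, core]
  simp only [sum_cnt]
  split
  · ring
  · simp

lemma eval_parityProj (Q : Finset (Finset (Fin n))) (p : MvPolynomial (Fin n) ℝ)
    (x : Fin n → ℝ) :
    (2:ℝ) ^ Q.card * MvPolynomial.eval x (parityProj Q p)
    = ∑ S ∈ Q.powerset, (∏ I ∈ Q, eps S I) *
        MvPolynomial.eval (fun j => wgt Q S j * x j) p := by
  rw [parityProj, map_sum, Finset.mul_sum]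
  have hR : ∀ S ∈ Q.powerset, (∏ I ∈ Q, eps S I) *
        MvPolynomial.eval (fun j => wgt Q S j * x j) p
      = ∑ α ∈ p.support, ((∏ I ∈ Q, eps S I) * ∏ j, wgt Q S j ^ α j) *
          (MvPolynomial.coeff α p * ∏ j, x j ^ α j) := by
    intro S _
    rw [MvPolynomial.eval_eq', Finset.mul_sum]
    refine Finset.sum_congr rfl fun α _ => ?_
    simp_rw [mul_pow]
    rw [Finset.prod_mul_distrib]
    ring
  rw [Finset.sum_congr rfl hR, Finset.sum_comm]
  refine Finset.sum_congr rfl fun α hα => ?_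
  rw [← Finset.sum_mul, core Q (fun j => α j)]
  rw [apply_ite (MvPolynomial.eval x), map_zero, MvPolynomial.eval_monomial]
  rw [Finsupp.prod_pow α (fun j => x j)]
  split
  · ring
  · simp

lemma rep_proj (Q : Finset (Finset (Fin n))) (T : (Fin t → Fin n) → ℝ)
    (p : MvPolynomial (Fin n) ℝ) (hT : ∀ x, tEval T x = MvPolynomial.eval x p) :
    ∀ x, tEval (projT Q T) x = MvPolynomial.eval x (parityProj Q p) := by
  intro x
  have h2 : (0:ℝ) < 2 ^ Q.card := by positivity
  refine mul_left_cancel₀ (ne_of_gt h2) ?_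
  rw [tEval_proj, eval_parityProj]
  exact Finset.sum_congr rfl fun S _ => by rw [hT]

end Part3
section Part4
variable {n t : ℕ}

lemma mat_smul_mul {d : ℕ} (c : ℝ) (a b : Mat d) : (c • a) * b = c • (a * b) := by
  ext v; simp [ContinuousLinearMap.mul_apply]

lemma mat_mul_smul {d : ℕ} (c : ℝ) (a b : Mat d) : a * (c • b) = c • (a * b) := by
  ext v; simp [ContinuousLinearMap.mul_apply]

lemma ofFn_smul_prod {d : ℕ} : ∀ {t : ℕ} (c : Fin t → ℝ) (A : Fin t → Mat d),
    (List.ofFn fun s => c s • A s).prod = (∏ s, c s) • (List.ofFn A).prod := by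
  intro t
  induction t with
  | zero => intro c A; simp
  | succ m ih =>
    intro c A
    rw [List.ofFn_succ, List.ofFn_succ, List.prod_cons, List.prod_cons,
      ih (fun s => c s.succ) (fun s => A s.succ), Fin.prod_univ_succ,
      mat_smul_mul, mat_mul_smul, smul_smul]

lemma prod_contraction {d : ℕ} (l : List (Mat d)) (h : ∀ a ∈ l, ‖a‖ ≤ 1) :
    ‖l.prod‖ ≤ 1 := by
  induction l with
  | nil =>
    rw [List.prod_nil]
    exact ContinuousLinearMap.norm_id_le
  | cons a l ih =>
    rw [List.prod_cons]
    calc ‖a * l.prod‖ ≤ ‖a‖ * ‖l.prod‖ := norm_mul_le _ _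
      _ ≤ 1 * 1 := mul_le_mul (h a List.mem_cons_self)
          (ih fun b hb => h b (List.mem_cons_of_mem a hb)) (norm_nonneg _) zero_le_one
      _ = 1 := one_mul 1

def cbSet {n t : ℕ} (T : (Fin t → Fin n) → ℝ) : Set ℝ :=
  {c : ℝ | ∃ (d : ℕ) (A : Fin n → Mat d),
    (∀ j, ‖A j‖ ≤ 1) ∧
    c = ‖∑ i : Fin t → Fin n, T i • (List.ofFn fun s => A (i s)).prod‖}

lemma cbNormT_eq (T : (Fin t → Fin n) → ℝ) : cbNormT T = sSup (cbSet T) := rfl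

lemma cbSet_bddAbove (T : (Fin t → Fin n) → ℝ) : BddAbove (cbSet T) := by
  refine ⟨∑ i : Fin t → Fin n, |T i|, ?_⟩
  rintro c ⟨d, A, hA, rfl⟩
  calc ‖∑ i : Fin t → Fin n, T i • (List.ofFn fun s => A (i s)).prod‖
      ≤ ∑ i : Fin t → Fin n, ‖T i • (List.ofFn fun s => A (i s)).prod‖ :=
        norm_sum_le _ _
    _ ≤ ∑ i : Fin t → Fin n, |T i| := by
        refine Finset.sum_le_sum fun i _ => ?_
        rw [norm_smul (α := ℝ) (β := Mat d), Real.norm_eq_abs]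
        calc |T i| * ‖(List.ofFn fun s => A (i s)).prod‖ ≤ |T i| * 1 := by
              refine mul_le_mul_of_nonneg_left ?_ (abs_nonneg _)
              refine prod_contraction _ fun a ha => ?_
              obtain ⟨s, rfl⟩ := List.mem_ofFn.1 ha
              exact hA (i s)
          _ = |T i| := mul_one _

lemma zero_mem_cbSet (T : (Fin t → Fin n) → ℝ) : (0:ℝ) ∈ cbSet T := by
  refine ⟨0, (fun _ => (0 : Mat 0)), fun j => by simp, ?_⟩
  symm
  rw [norm_eq_zero]
  exact Subsingleton.elim _ _

lemma cbNormT_nonneg (T : (Fin t → Fin n) → ℝ) : 0 ≤ cbNormT T :=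
  le_csSup (cbSet_bddAbove T) (zero_mem_cbSet T)

lemma mem_le_cbNormT (T : (Fin t → Fin n) → ℝ) {c : ℝ} (hc : c ∈ cbSet T) :
    c ≤ cbNormT T := le_csSup (cbSet_bddAbove T) hc

end Part4
section Part5
variable {n t : ℕ}

lemma matrix_avg {d : ℕ} (Q : Finset (Finset (Fin n))) (T : (Fin t → Fin n) → ℝ)
    (A : Fin n → Mat d) :
    ∑ S ∈ Q.powerset, (∏ I ∈ Q, eps S I) •
        (∑ i : Fin t → Fin n, T i • (List.ofFn fun s => wgt Q S (i s) • A (i s)).prod)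
    = ((2:ℝ) ^ Q.card) •
        ∑ i : Fin t → Fin n, projT Q T i • (List.ofFn fun s => A (i s)).prod := by
  have h1 : ∀ S ∈ Q.powerset, (∏ I ∈ Q, eps S I) •
        (∑ i : Fin t → Fin n, T i • (List.ofFn fun s => wgt Q S (i s) • A (i s)).prod)
      = ∑ i : Fin t → Fin n,
          (((∏ I ∈ Q, eps S I) *
              ∏ j, wgt Q S j ^ (Finset.univ.filter fun s => i s = j).card) * T i) •
            (List.ofFn fun s => A (i s)).prod := by
    intro S _
    rw [Finset.smul_sum]
    refine Finset.sum_congr rfl fun i _ => ?_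
    rw [ofFn_smul_prod (fun s => wgt Q S (i s)) (fun s => A (i s)), smul_smul, smul_smul,
      prod_fib (wgt Q S) i]
    congr 1
    ring
  rw [Finset.sum_congr rfl h1, Finset.sum_comm, Finset.smul_sum]
  refine Finset.sum_congr rfl fun i _ => ?_
  rw [← Finset.sum_smul, ← Finset.sum_mul, core]
  simp only [sum_cnt]
  unfold projT
  split
  · rw [mul_smul]
  · rw [zero_mul, zero_smul, smul_zero]


lemma cbNormT_proj_le (Q : Finset (Finset (Fin n))) (T : (Fin t → Fin n) → ℝ) :
    cbNormT (projT Q T) ≤ cbNormT T := by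
  rw [cbNormT_eq]
  apply Real.sSup_le _ (cbNormT_nonneg T)
  rintro c ⟨d, A, hA, rfl⟩
  set F := ∑ i : Fin t → Fin n, projT Q T i • (List.ofFn fun s => A (i s)).prod with hF
  have key := matrix_avg Q T A
  have h2pos : (0:ℝ) < 2 ^ Q.card := by positivity
  have hL : ‖((2:ℝ) ^ Q.card) • F‖ = (2:ℝ) ^ Q.card * ‖F‖ := by
    rw [norm_smul (α := ℝ) (β := Mat d), Real.norm_eq_abs, abs_of_pos h2pos]
  have hR : ‖∑ S ∈ Q.powerset, (∏ I ∈ Q, eps S I) •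
        (∑ i : Fin t → Fin n, T i • (List.ofFn fun s => wgt Q S (i s) • A (i s)).prod)‖
      ≤ (2:ℝ) ^ Q.card * cbNormT T := by
    calc ‖∑ S ∈ Q.powerset, (∏ I ∈ Q, eps S I) •
          (∑ i : Fin t → Fin n, T i • (List.ofFn fun s => wgt Q S (i s) • A (i s)).prod)‖
        ≤ ∑ S ∈ Q.powerset, ‖(∏ I ∈ Q, eps S I) •
          (∑ i : Fin t → Fin n, T i • (List.ofFn fun s => wgt Q S (i s) • A (i s)).prod)‖ :=
          norm_sum_le _ _
      _ ≤ ∑ _S ∈ Q.powerset, cbNormT T := by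
          refine Finset.sum_le_sum fun S _ => ?_
          rw [norm_smul (α := ℝ) (β := Mat d), Real.norm_eq_abs, Finset.abs_prod]
          rw [Finset.prod_congr rfl fun I _ => abs_eps S I, Finset.prod_const_one, one_mul]
          refine mem_le_cbNormT T ⟨d, fun j => wgt Q S j • A j, fun j => ?_, rfl⟩
          rw [norm_smul (α := ℝ) (β := Mat d), Real.norm_eq_abs, abs_wgt, one_mul]
          exact hA j
      _ = (2:ℝ) ^ Q.card * cbNormT T := by
          rw [Finset.sum_const, Finset.card_powerset, nsmul_eq_mul]
          push_cast
          ring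
  have : (2:ℝ) ^ Q.card * ‖F‖ ≤ (2:ℝ) ^ Q.card * cbNormT T := by
    rw [← hL, ← key]
    exact hR
  exact le_of_mul_le_mul_left this h2pos

end Part5
section Part6
variable {n t : ℕ}

/-- The exponent multiset of an index tuple, as a finsupp. -/
def alphaOf {n t : ℕ} (i : Fin t → Fin n) : Fin n →₀ ℕ :=
  (↑(List.ofFn i) : Multiset (Fin n)).toFinsupp

lemma toMultiset_alphaOf (i : Fin t → Fin n) :
    (alphaOf i).toMultiset = ↑(List.ofFn i) :=
  Multiset.toFinsupp_toMultiset _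

/-- A canonical index tuple realizing a given exponent vector. -/
def canonOf {n t : ℕ} (α : Fin n →₀ ℕ) (h : α.toMultiset.toList.length = t) :
    Fin t → Fin n :=
  fun s => α.toMultiset.toList.get (Fin.cast h.symm s)

lemma canonOf_congr {α β : Fin n →₀ ℕ} (hαβ : α = β) (h : α.toMultiset.toList.length = t)
    (h' : β.toMultiset.toList.length = t) : canonOf α h = canonOf β h' := by
  subst hαβ; rfl

lemma ofFn_canonOf (α : Fin n →₀ ℕ) (h : α.toMultiset.toList.length = t) :
    List.ofFn (canonOf α h) = α.toMultiset.toList := by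
  refine List.ext_getElem (by rw [List.length_ofFn, h]) ?_
  intro k h1 h2
  simp only [List.getElem_ofFn, canonOf, List.get_eq_getElem]
  rfl

lemma alphaOf_canonOf (α : Fin n →₀ ℕ) (h : α.toMultiset.toList.length = t) :
    alphaOf (canonOf α h) = α := by
  unfold alphaOf
  rw [ofFn_canonOf, Multiset.coe_toList, Finsupp.toMultiset_toFinsupp]

lemma len_alphaOf (i : Fin t → Fin n) : (alphaOf i).toMultiset.toList.length = t := by
  rw [Multiset.length_toList, toMultiset_alphaOf, Multiset.coe_card, List.length_ofFn]

/-- The canonical representative of an index tuple. -/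
def canonI {n t : ℕ} (i : Fin t → Fin n) : Fin t → Fin n :=
  canonOf (alphaOf i) (len_alphaOf i)

lemma canonI_congr {i i' : Fin t → Fin n} (h : alphaOf i = alphaOf i') :
    canonI i = canonI i' :=
  canonOf_congr h _ _

lemma canonI_canonOf (α : Fin n →₀ ℕ) (h : α.toMultiset.toList.length = t) :
    canonI (canonOf α h) = canonOf α h := by
  unfold canonI
  exact canonOf_congr (alphaOf_canonOf α h) _ _

lemma multiset_prod_pow (α : Fin n →₀ ℕ) (x : Fin n → ℝ) :
    ((α.toMultiset.map x)).prod = ∏ j, x j ^ α j := by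
  rw [Finsupp.toMultiset_map, Finsupp.prod_toMultiset,
    Finsupp.prod_mapDomain_index (fun b => pow_zero b) (fun b m₁ m₂ => pow_add b m₁ m₂)]
  exact Finsupp.prod_pow α fun j => x j

lemma prod_eval_alphaOf (x : Fin n → ℝ) (a : Fin t → Fin n) :
    ∏ s, x (a s) = ∏ j, x j ^ (alphaOf a) j := by
  rw [← multiset_prod_pow, toMultiset_alphaOf, Multiset.map_coe, Multiset.prod_coe,
    List.map_ofFn, List.prod_ofFn]
  rfl

/-- A symmetric-style representing tensor of a homogeneous polynomial. -/
def T0 {n t : ℕ} (p : MvPolynomial (Fin n) ℝ) : (Fin t → Fin n) → ℝ :=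
  fun i => if canonI i = i then MvPolynomial.coeff (alphaOf i) p else 0

lemma len_of_mem_support {p : MvPolynomial (Fin n) ℝ} (hp : p.IsHomogeneous t)
    {α : Fin n →₀ ℕ} (hα : α ∈ p.support) : α.toMultiset.toList.length = t := by
  rw [Multiset.length_toList, Finsupp.card_toMultiset]
  have h1 : (Finsupp.weight 1) α = t := hp (MvPolynomial.mem_support_iff.1 hα)
  have h2 : α.sum (fun _ => id) = Finsupp.degree α := by
    rfl
  rw [h2, Finsupp.degree_eq_weight_one]
  exact h1

lemma tEval_T0 {p : MvPolynomial (Fin n) ℝ} (hp : p.IsHomogeneous t) (x : Fin n → ℝ) :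
    tEval (n := n) (t := t) (T0 p) x = MvPolynomial.eval x p := by
  rw [MvPolynomial.eval_eq']
  unfold tEval
  refine Finset.sum_bij_ne_zero (fun a _ _ => alphaOf a) ?_ ?_ ?_ ?_
  · intro a h₁ h₂
    rw [MvPolynomial.mem_support_iff]
    intro hc
    apply h₂
    unfold T0
    split
    · rw [hc, zero_mul]
    · rw [zero_mul]
  · intro a₁ h₁₁ h₁₂ a₂ h₂₁ h₂₂ heq
    have c₁ : canonI a₁ = a₁ := by
      by_contra hc
      exact h₁₂ (by unfold T0; rw [if_neg hc, zero_mul])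
    have c₂ : canonI a₂ = a₂ := by
      by_contra hc
      exact h₂₂ (by unfold T0; rw [if_neg hc, zero_mul])
    rw [← c₁, ← c₂]
    exact canonI_congr heq
  · intro α hα hg
    have hlen := len_of_mem_support hp hα
    refine ⟨canonOf α hlen, Finset.mem_univ _, ?_, alphaOf_canonOf α hlen⟩
    have hx : ∏ s, x (canonOf α hlen s) = ∏ j, x j ^ α j := by
      rw [prod_eval_alphaOf x (canonOf α hlen), alphaOf_canonOf α hlen]
    unfold T0
    rw [canonI_canonOf, if_pos rfl, alphaOf_canonOf α hlen, hx]
    exact hg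
  · intro a h₁ h₂
    have c₁ : canonI a = a := by
      by_contra hc
      exact h₂ (by unfold T0; rw [if_neg hc, zero_mul])
    unfold T0
    rw [if_pos c₁, prod_eval_alphaOf x a]

theorem parityProj_cb_le' (n t : ℕ) (Q : Finset (Finset (Fin n)))
    (p : MvPolynomial (Fin n) ℝ) (hp : p.IsHomogeneous t) :
    polyCb n t (parityProj Q p) ≤ polyCb n t p := by
  have hbdd : BddBelow {c : ℝ | ∃ T : (Fin t → Fin n) → ℝ,
      (∀ x : Fin n → ℝ, tEval T x = MvPolynomial.eval x (parityProj Q p)) ∧ c = cbNormT T} := by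
    refine ⟨0, ?_⟩
    rintro c ⟨T, _, rfl⟩
    exact cbNormT_nonneg T
  have hne : {c : ℝ | ∃ T : (Fin t → Fin n) → ℝ,
      (∀ x : Fin n → ℝ, tEval T x = MvPolynomial.eval x p) ∧ c = cbNormT T}.Nonempty :=
    ⟨cbNormT (T0 p), T0 p, fun x => tEval_T0 hp x, rfl⟩
  refine le_csInf hne ?_
  rintro c ⟨T, hT, rfl⟩
  calc polyCb n t (parityProj Q p) ≤ cbNormT (projT Q T) :=
        csInf_le hbdd ⟨projT Q T, rep_proj Q T p hT, rfl⟩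
    _ ≤ cbNormT T := cbNormT_proj_le Q T

end Part6


/-- The parity projection `Π_Q` is a contraction for the completely bounded norm of
homogeneous forms: `‖Π_Q p‖_cb ≤ ‖p‖_cb`. -/
theorem parityProj_cb_le (n t : ℕ) (Q : Finset (Finset (Fin n)))
    (hQ : (Q : Set (Finset (Fin n))).Pairwise Disjoint)
    (p : MvPolynomial (Fin n) ℝ) (hp : p.IsHomogeneous t) :
    polyCb n t (parityProj Q p) ≤ polyCb n t p := by
  exact parityProj_cb_le' n t Q p hp
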